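/- The Segre cubic threefold Σ ⊂ ℙ⁵(ℂ) contains exactly 15 planes: a 3-dimensional linear subspace W ⊆ ℂ⁶ satisfies e_1(x) = e_3(x) = 0 for all x ∈ W (i.e., ℙ(W) ⊆ Σ) if and only if W = {x ∈ ℂ⁶ : x_a + x_b = x_c + x_d = x_e + x_f = 0} for some partition {{a,b},{c,d},{e,f}} of {0,1,2,3,4,5} into three pairs; there are exactly 15 such subspaces. -/

import Mathlib

/-!
The Segre cubic threefold `Σ ⊂ ℙ⁵(ℂ)` contains exactly 15 planes: a 3-dimensional linear
subspace `W ⊆ ℂ⁶` satisfies `e₁ = e₃ = 0` identically on `W` iff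
`W = {x : x_a + x_b = x_c + x_d = x_e + x_f = 0}` for some partition of `{0,…,5}` into
three pairs (encoded by a fixed-point-free involution of `Fin 6`); there are exactly 15
such subspaces.
-/

open MvPolynomial

noncomputable section

/-- The `k`-th elementary symmetric polynomial in six complex variables. -/
def e (k : ℕ) : MvPolynomial (Fin 6) ℂ := esymm (Fin 6) ℂ k

open Matrix


lemma eval_e1 (x : Fin 6 → ℂ) : eval x (e 1) = ∑ i, x i := by simp [e, esymm_one]

lemma eval_e3 (x : Fin 6 → ℂ) (h1 : eval x (e 1) = 0) :
    eval x (e 3) = 0 ↔ (∑ i, (x i)^3) = 0 := by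
  have hp := congrArg (eval x) (psum_eq_mul_esymm_sub_sum (Fin 6) ℂ 3 (by norm_num))
  have had : (Finset.HasAntidiagonal.antidiagonal 3).filter (fun a : ℕ × ℕ => a.1 ∈ Set.Ioo 0 3)
      = {(1,2),(2,1)} := by decide
  rw [had] at hp
  have h1' : (∑ i, x i) = 0 := by simpa [e, esymm_one] using h1
  simp [psum, esymm_one, Finset.sum_insert, e, h1'] at hp ⊢
  have h3 : (∑ i : Fin 6, x i ^ 3) = 3 * eval x (esymm (Fin 6) ℂ 3) := by
    rw [hp]; ring
  constructor
  · intro h; rw [h3, h]; ring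
  · intro h; rw [h] at h3; linear_combination -h3/3

-- change 'core' from example-section file: it is a named lemma already

lemma lin_poly_zero {u v : ℂ} (h : Polynomial.C u + Polynomial.X * Polynomial.C v = 0) :
    u = 0 ∧ v = 0 := by
  constructor
  · have := congrArg (fun p => Polynomial.coeff p 0) h; simpa using this
  · have := congrArg (fun p => Polynomial.coeff p 1) h; simpa using this

lemma three_linear {a1 a2 b1 b2 c1 c2 : ℂ}
    (h : ∀ t : ℂ, (a1 + t*a2)*((b1 + t*b2)*(c1 + t*c2)) = 0) :
    (a1 = 0 ∧ a2 = 0) ∨ (b1 = 0 ∧ b2 = 0) ∨ (c1 = 0 ∧ c2 = 0) := by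
  have hP : (Polynomial.C a1 + Polynomial.X * Polynomial.C a2) *
      ((Polynomial.C b1 + Polynomial.X * Polynomial.C b2) *
       (Polynomial.C c1 + Polynomial.X * Polynomial.C c2)) = 0 := by
    apply Polynomial.funext; intro t
    simp only [Polynomial.eval_mul, Polynomial.eval_add, Polynomial.eval_C, Polynomial.eval_X,
      Polynomial.eval_zero]
    linear_combination h t
  rcases mul_eq_zero.1 hP with h1 | h2
  · exact Or.inl (lin_poly_zero h1)
  · rcases mul_eq_zero.1 h2 with h3 | h4
    · exact Or.inr (Or.inl (lin_poly_zero h3))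
    · exact Or.inr (Or.inr (lin_poly_zero h4))

lemma core (a b c : Fin 3 → ℂ)
    (hE : ∀ s t u : Fin 3, a s * a t * a u + b s * b t * b u + c s * c t * c u
          + (if s = t ∧ t = u then 1 else 0) = 0)
    (hL : ∀ s, a s + b s + c s + 1 = 0) :
    ∃ k0 k1 k2 : Fin 3, k0 ≠ k1 ∧ k0 ≠ k2 ∧ k1 ≠ k2 ∧
      (∀ j, a j = if j = k0 then -1 else 0) ∧
      (∀ j, b j = if j = k1 then -1 else 0) ∧
      (∀ j, c j = if j = k2 then -1 else 0) := by
  have KI : ∀ x : Fin 3 → ℂ,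
      (Matrix.of ![a, b, c]).det ^ 2 *
        ((∑ j, a j * x j) * (∑ j, b j * x j) * (∑ j, c j * x j)) = -(x 0 * x 1 * x 2) := by
    intro x
    have hN : (Matrix.of ![a, b, c])ᵀ *
        (Matrix.diagonal ![∑ j, a j * x j, ∑ j, b j * x j, ∑ j, c j * x j]) *
        (Matrix.of ![a, b, c]) = -(Matrix.diagonal x) := by
      apply Matrix.ext
      intro i j
      have he0 := hE 0 i j; have he1 := hE 1 i j; have he2 := hE 2 i j
      fin_cases i <;> fin_cases j <;>
        simp [Matrix.mul_apply, Matrix.transpose_apply, Matrix.diagonal, Fin.sum_univ_three,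
          Matrix.vecHead, Matrix.vecTail] <;>
        simp at he0 he1 he2 <;>
        linear_combination x 0 * he0 + x 1 * he1 + x 2 * he2
    have hdet := congrArg Matrix.det hN
    rw [Matrix.det_mul, Matrix.det_mul, Matrix.det_transpose, Matrix.det_diagonal] at hdet
    rw [Matrix.det_neg, Matrix.det_diagonal] at hdet
    simp [Fin.prod_univ_three] at hdet
    linear_combination hdet
  have h111 : (Matrix.of ![a, b, c]).det ^ 2 *
      ((a 0 + a 1 + a 2) * (b 0 + b 1 + b 2) * (c 0 + c 1 + c 2)) = -1 := by
    have := KI ![1,1,1]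
    simp [Fin.sum_univ_three] at this
    linear_combination this
  have hD : (Matrix.of ![a, b, c]).det ^ 2 ≠ 0 := by
    intro h; rw [h, zero_mul] at h111; exact absurd h111.symm (by norm_num)
  have hsa : a 0 + a 1 + a 2 ≠ 0 := by
    intro h
    have : (-1 : ℂ) = 0 := by
      rw [← h111]
      linear_combination ((Matrix.of ![a, b, c]).det ^ 2 * ((b 0 + b 1 + b 2) * (c 0 + c 1 + c 2))) * h
    norm_num at this
  have hsb : b 0 + b 1 + b 2 ≠ 0 := by
    intro h
    have : (-1 : ℂ) = 0 := by
      rw [← h111]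
      linear_combination ((Matrix.of ![a, b, c]).det ^ 2 * ((a 0 + a 1 + a 2) * (c 0 + c 1 + c 2))) * h
    norm_num at this
  have hsc : c 0 + c 1 + c 2 ≠ 0 := by
    intro h
    have : (-1 : ℂ) = 0 := by
      rw [← h111]
      linear_combination ((Matrix.of ![a, b, c]).det ^ 2 * ((a 0 + a 1 + a 2) * (b 0 + b 1 + b 2))) * h
    norm_num at this
  have h01 : (a 0 = 0 ∧ a 1 = 0) ∨ (b 0 = 0 ∧ b 1 = 0) ∨ (c 0 = 0 ∧ c 1 = 0) := by
    apply three_linear; intro t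
    have := KI ![1, t, 0]
    simp only [Fin.sum_univ_three, Matrix.cons_val_zero, Matrix.cons_val_one, Matrix.head_cons,
      Matrix.cons_val_two, Matrix.tail_cons, mul_one, mul_zero, add_zero, one_mul, zero_mul,
      neg_zero] at this
    have h2 := (mul_eq_zero.1 (by linear_combination this :
      (Matrix.of ![a, b, c]).det ^ 2 * ((a 0 + t * a 1) * ((b 0 + t * b 1) * (c 0 + t * c 1))) = 0)).resolve_left hD
    linear_combination h2
  have h02 : (a 0 = 0 ∧ a 2 = 0) ∨ (b 0 = 0 ∧ b 2 = 0) ∨ (c 0 = 0 ∧ c 2 = 0) := by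
    apply three_linear; intro t
    have := KI ![1, 0, t]
    simp only [Fin.sum_univ_three, Matrix.cons_val_zero, Matrix.cons_val_one, Matrix.head_cons,
      Matrix.cons_val_two, Matrix.tail_cons, mul_one, mul_zero, add_zero, one_mul, zero_mul,
      neg_zero] at this
    have h2 := (mul_eq_zero.1 (by linear_combination this :
      (Matrix.of ![a, b, c]).det ^ 2 * ((a 0 + t * a 2) * ((b 0 + t * b 2) * (c 0 + t * c 2))) = 0)).resolve_left hD
    linear_combination h2
  have h12 : (a 1 = 0 ∧ a 2 = 0) ∨ (b 1 = 0 ∧ b 2 = 0) ∨ (c 1 = 0 ∧ c 2 = 0) := by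
    apply three_linear; intro t
    have := KI ![0, 1, t]
    simp only [Fin.sum_univ_three, Matrix.cons_val_zero, Matrix.cons_val_one, Matrix.head_cons,
      Matrix.cons_val_two, Matrix.tail_cons, mul_one, mul_zero, add_zero, zero_add, one_mul,
      zero_mul, neg_zero] at this
    have h2 := (mul_eq_zero.1 (by linear_combination this :
      (Matrix.of ![a, b, c]).det ^ 2 * ((a 1 + t * a 2) * ((b 1 + t * b 2) * (c 1 + t * c 2))) = 0)).resolve_left hD
    linear_combination h2
  rcases h01 with (⟨ha0_01, ha1_01⟩|⟨hb0_01, hb1_01⟩|⟨hc0_01, hc1_01⟩) <;> rcases h02 with (⟨ha0_02, ha2_02⟩|⟨hb0_02, hb2_02⟩|⟨hc0_02, hc2_02⟩) <;> rcases h12 with (⟨ha1_12, ha2_12⟩|⟨hb1_12, hb2_12⟩|⟨hc1_12, hc2_12⟩)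
  · exact absurd (show a 0 + a 1 + a 2 = 0 by linear_combination ha0_02 + ha1_12 + ha2_12) hsa
  · exact absurd (show a 0 + a 1 + a 2 = 0 by linear_combination ha0_02 + ha1_01 + ha2_02) hsa
  · exact absurd (show a 0 + a 1 + a 2 = 0 by linear_combination ha0_02 + ha1_01 + ha2_02) hsa
  · exact absurd (show a 0 + a 1 + a 2 = 0 by linear_combination ha0_01 + ha1_12 + ha2_12) hsa
  · exact absurd (show b 0 + b 1 + b 2 = 0 by linear_combination hb0_02 + hb1_12 + hb2_12) hsb
  · refine ⟨2, 1, 0, by decide, by decide, by decide, ?_, ?_, ?_⟩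
    · intro j; fin_cases j
      · simpa using ha0_01
      · simpa using ha1_01
      · simpa using (show a 2 = -1 by linear_combination hL 2 - hb2_02 - hc2_12)
    · intro j; fin_cases j
      · simpa using hb0_02
      · simpa using (show b 1 = -1 by linear_combination hL 1 - ha1_01 - hc1_12)
      · simpa using hb2_02
    · intro j; fin_cases j
      · simpa using (show c 0 = -1 by linear_combination hL 0 - ha0_01 - hb0_02)
      · simpa using hc1_12
      · simpa using hc2_12
  · exact absurd (show a 0 + a 1 + a 2 = 0 by linear_combination ha0_01 + ha1_12 + ha2_12) hsa
  · refine ⟨2, 0, 1, by decide, by decide, by decide, ?_, ?_, ?_⟩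
    · intro j; fin_cases j
      · simpa using ha0_01
      · simpa using ha1_01
      · simpa using (show a 2 = -1 by linear_combination hL 2 - hb2_12 - hc2_02)
    · intro j; fin_cases j
      · simpa using (show b 0 = -1 by linear_combination hL 0 - ha0_01 - hc0_02)
      · simpa using hb1_12
      · simpa using hb2_12
    · intro j; fin_cases j
      · simpa using hc0_02
      · simpa using (show c 1 = -1 by linear_combination hL 1 - ha1_01 - hb1_12)
      · simpa using hc2_02
  · exact absurd (show c 0 + c 1 + c 2 = 0 by linear_combination hc0_02 + hc1_12 + hc2_12) hsc
  · exact absurd (show a 0 + a 1 + a 2 = 0 by linear_combination ha0_02 + ha1_12 + ha2_12) hsa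
  · exact absurd (show b 0 + b 1 + b 2 = 0 by linear_combination hb0_01 + hb1_12 + hb2_12) hsb
  · refine ⟨1, 2, 0, by decide, by decide, by decide, ?_, ?_, ?_⟩
    · intro j; fin_cases j
      · simpa using ha0_02
      · simpa using (show a 1 = -1 by linear_combination hL 1 - hb1_01 - hc1_12)
      · simpa using ha2_02
    · intro j; fin_cases j
      · simpa using hb0_01
      · simpa using hb1_01
      · simpa using (show b 2 = -1 by linear_combination hL 2 - ha2_02 - hc2_12)
    · intro j; fin_cases j
      · simpa using (show c 0 = -1 by linear_combination hL 0 - ha0_02 - hb0_01)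
      · simpa using hc1_12
      · simpa using hc2_12
  · exact absurd (show b 0 + b 1 + b 2 = 0 by linear_combination hb0_02 + hb1_01 + hb2_02) hsb
  · exact absurd (show b 0 + b 1 + b 2 = 0 by linear_combination hb0_02 + hb1_12 + hb2_12) hsb
  · exact absurd (show b 0 + b 1 + b 2 = 0 by linear_combination hb0_02 + hb1_01 + hb2_02) hsb
  · refine ⟨0, 2, 1, by decide, by decide, by decide, ?_, ?_, ?_⟩
    · intro j; fin_cases j
      · simpa using (show a 0 = -1 by linear_combination hL 0 - hb0_01 - hc0_02)
      · simpa using ha1_12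
      · simpa using ha2_12
    · intro j; fin_cases j
      · simpa using hb0_01
      · simpa using hb1_01
      · simpa using (show b 2 = -1 by linear_combination hL 2 - ha2_12 - hc2_02)
    · intro j; fin_cases j
      · simpa using hc0_02
      · simpa using (show c 1 = -1 by linear_combination hL 1 - ha1_12 - hb1_01)
      · simpa using hc2_02
  · exact absurd (show b 0 + b 1 + b 2 = 0 by linear_combination hb0_01 + hb1_12 + hb2_12) hsb
  · exact absurd (show c 0 + c 1 + c 2 = 0 by linear_combination hc0_02 + hc1_12 + hc2_12) hsc
  · exact absurd (show a 0 + a 1 + a 2 = 0 by linear_combination ha0_02 + ha1_12 + ha2_12) hsa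
  · refine ⟨1, 0, 2, by decide, by decide, by decide, ?_, ?_, ?_⟩
    · intro j; fin_cases j
      · simpa using ha0_02
      · simpa using (show a 1 = -1 by linear_combination hL 1 - hb1_12 - hc1_01)
      · simpa using ha2_02
    · intro j; fin_cases j
      · simpa using (show b 0 = -1 by linear_combination hL 0 - ha0_02 - hc0_01)
      · simpa using hb1_12
      · simpa using hb2_12
    · intro j; fin_cases j
      · simpa using hc0_01
      · simpa using hc1_01
      · simpa using (show c 2 = -1 by linear_combination hL 2 - ha2_02 - hb2_12)
  · exact absurd (show c 0 + c 1 + c 2 = 0 by linear_combination hc0_01 + hc1_12 + hc2_12) hsc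
  · refine ⟨0, 1, 2, by decide, by decide, by decide, ?_, ?_, ?_⟩
    · intro j; fin_cases j
      · simpa using (show a 0 = -1 by linear_combination hL 0 - hb0_02 - hc0_01)
      · simpa using ha1_12
      · simpa using ha2_12
    · intro j; fin_cases j
      · simpa using hb0_02
      · simpa using (show b 1 = -1 by linear_combination hL 1 - ha1_12 - hc1_01)
      · simpa using hb2_02
    · intro j; fin_cases j
      · simpa using hc0_01
      · simpa using hc1_01
      · simpa using (show c 2 = -1 by linear_combination hL 2 - ha2_12 - hb2_02)
  · exact absurd (show b 0 + b 1 + b 2 = 0 by linear_combination hb0_02 + hb1_12 + hb2_12) hsb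
  · exact absurd (show c 0 + c 1 + c 2 = 0 by linear_combination hc0_01 + hc1_12 + hc2_12) hsc
  · exact absurd (show c 0 + c 1 + c 2 = 0 by linear_combination hc0_02 + hc1_01 + hc2_02) hsc
  · exact absurd (show c 0 + c 1 + c 2 = 0 by linear_combination hc0_02 + hc1_01 + hc2_02) hsc
  · exact absurd (show c 0 + c 1 + c 2 = 0 by linear_combination hc0_02 + hc1_12 + hc2_12) hsc



def pairSub (σ : Equiv.Perm (Fin 6)) : Submodule ℂ (Fin 6 → ℂ) where
  carrier := {x | ∀ i, x i + x (σ i) = 0}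
  add_mem' := by
    intro x y hx hy i
    have := hx i; have := hy i
    simp only [Pi.add_apply]
    linear_combination hx i + hy i
  zero_mem' := by intro i; simp
  smul_mem' := by
    intro c x hx i
    simp only [Pi.smul_apply, smul_eq_mul]
    linear_combination c * hx i

lemma mem_pairSub {σ : Equiv.Perm (Fin 6)} {x : Fin 6 → ℂ} :
    x ∈ pairSub σ ↔ ∀ i, x i + x (σ i) = 0 := Iff.rfl

lemma six_cover {i0 j0 i1 j1 i2 j2 : Fin 6}
    (h1 : i0 ≠ j0) (h2 : i0 ≠ i1) (h3 : i0 ≠ j1) (h4 : i0 ≠ i2) (h5 : i0 ≠ j2)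
    (h6 : j0 ≠ i1) (h7 : j0 ≠ j1) (h8 : j0 ≠ i2) (h9 : j0 ≠ j2)
    (h10 : i1 ≠ j1) (h11 : i1 ≠ i2) (h12 : i1 ≠ j2)
    (h13 : j1 ≠ i2) (h14 : j1 ≠ j2) (h15 : i2 ≠ j2) (k : Fin 6) :
    k = i0 ∨ k = j0 ∨ k = i1 ∨ k = j1 ∨ k = i2 ∨ k = j2 := by
  have hset : ({i0, j0, i1, j1, i2, j2} : Finset (Fin 6)) = Finset.univ := by
    apply Finset.eq_univ_of_card
    rw [Finset.card_insert_of_notMem (by simp [h1, h2, h3, h4, h5]),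
      Finset.card_insert_of_notMem (by simp [h6, h7, h8, h9]),
      Finset.card_insert_of_notMem (by simp [h10, h11, h12]),
      Finset.card_insert_of_notMem (by simp [h13, h14]),
      Finset.card_insert_of_notMem (by simp [h15]), Finset.card_singleton]
    rfl
  have : k ∈ ({i0, j0, i1, j1, i2, j2} : Finset (Fin 6)) := hset ▸ Finset.mem_univ k
  simpa using this

lemma single_pair_mem {σ : Equiv.Perm (Fin 6)} (hinv : ∀ i, σ (σ i) = i)
    (p : Fin 6) (hp : σ p ≠ p) :
    (Pi.single p 1 - Pi.single (σ p) (1 : ℂ)) ∈ pairSub σ := by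
  intro i
  by_cases h1 : i = p
  · subst h1
    simp [Pi.single_eq_of_ne hp, Pi.single_eq_of_ne (Ne.symm hp)]
  · by_cases h2 : i = σ p
    · subst h2
      rw [hinv p]
      simp [Pi.single_eq_of_ne hp, Pi.single_eq_of_ne (Ne.symm hp)]
    · have hσ1 : σ i ≠ p := by
        intro h; apply h2; rw [← h, hinv]
      have hσ2 : σ i ≠ σ p := fun h => h1 (σ.injective h)
      simp [Pi.single_eq_of_ne h1, Pi.single_eq_of_ne h2,
        Pi.single_eq_of_ne hσ1, Pi.single_eq_of_ne hσ2]


lemma pairSub_eq_span (σ : Equiv.Perm (Fin 6)) (hinv : ∀ i, σ (σ i) = i)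
    {i0 i1 i2 : Fin 6} (h01 : i0 ≠ i1) (h02 : i0 ≠ i2) (h12 : i1 ≠ i2)
    (hne0 : σ i0 ≠ i0) (hne1 : σ i1 ≠ i1) (hne2 : σ i2 ≠ i2)
    (hA : i1 ≠ σ i0) (hB : i2 ≠ σ i0) (hC : i2 ≠ σ i1)
    (u : Fin 3 → Fin 6 → ℂ)
    (hu : u = ![Pi.single i0 1 - Pi.single (σ i0) 1,
        Pi.single i1 1 - Pi.single (σ i1) 1,
        Pi.single i2 1 - Pi.single (σ i2) (1 : ℂ)]) :
    pairSub σ = Submodule.span ℂ (Set.range u) ∧ LinearIndependent ℂ u := by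
  have d1 : i0 ≠ σ i0 := Ne.symm hne0
  have d3 : i0 ≠ σ i1 := by intro h; apply hA; rw [h, hinv]
  have d5 : i0 ≠ σ i2 := by intro h; apply hB; rw [h, hinv]
  have d6 : σ i0 ≠ i1 := Ne.symm hA
  have d7 : σ i0 ≠ σ i1 := fun h => h01 (σ.injective h)
  have d8 : σ i0 ≠ i2 := Ne.symm hB
  have d9 : σ i0 ≠ σ i2 := fun h => h02 (σ.injective h)
  have d10 : i1 ≠ σ i1 := Ne.symm hne1
  have d12 : i1 ≠ σ i2 := by intro h; apply hC; rw [h, hinv]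
  have d13 : σ i1 ≠ i2 := Ne.symm hC
  have d14 : σ i1 ≠ σ i2 := fun h => h12 (σ.injective h)
  have d15 : i2 ≠ σ i2 := Ne.symm hne2
  have cover := fun k => six_cover d1 h01 d3 h02 d5 d6 d7 d8 d9 d10 h12 d12 d13 d14 d15 k
  have hval : ∀ k, (u 0 k = (if k = i0 then 1 else 0) - (if k = σ i0 then 1 else 0))
      ∧ (u 1 k = (if k = i1 then 1 else 0) - (if k = σ i1 then 1 else 0))
      ∧ (u 2 k = (if k = i2 then 1 else 0) - (if k = σ i2 then 1 else 0)) := by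
    intro k
    subst hu
    refine ⟨?_, ?_, ?_⟩ <;> simp [Pi.single_apply]
  have hmem : ∀ t, u t ∈ pairSub σ := by
    intro t
    fin_cases t <;> rw [hu]
    · exact single_pair_mem hinv i0 hne0
    · exact single_pair_mem hinv i1 hne1
    · exact single_pair_mem hinv i2 hne2
  constructor
  · apply le_antisymm
    · intro x hx
      have hxval : x = x i0 • u 0 + x i1 • u 1 + x i2 • u 2 := by
        funext k
        have h0 := (hval k).1
        have h1 := (hval k).2.1
        have h2 := (hval k).2.2
        simp only [Pi.add_apply, Pi.smul_apply, smul_eq_mul, h0, h1, h2]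
        rcases cover k with rfl | rfl | rfl | rfl | rfl | rfl
        · simp [d1, h01, d3, h02, d5]
        · simp only [if_neg d6, if_neg d7, if_neg d8, if_neg d9, if_neg (Ne.symm d1),
            if_pos]
          simp
          linear_combination hx i0
        · simp [Ne.symm h01, Ne.symm d6, d10, h12, d12]
        · simp only [if_neg (Ne.symm d3), if_neg (Ne.symm d7), if_neg d13, if_neg d14,
            if_neg (Ne.symm d10), if_pos]
          simp
          linear_combination hx i1
        · simp [Ne.symm h02, Ne.symm d8, Ne.symm h12, Ne.symm d13, d15]
        · simp only [if_neg (Ne.symm d5), if_neg (Ne.symm d9), if_neg (Ne.symm d12),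
            if_neg (Ne.symm d14), if_neg (Ne.symm d15), if_pos]
          simp
          linear_combination hx i2
      rw [hxval]
      have m0 : u 0 ∈ Submodule.span ℂ (Set.range u) :=
        Submodule.subset_span (Set.mem_range_self 0)
      have m1 : u 1 ∈ Submodule.span ℂ (Set.range u) :=
        Submodule.subset_span (Set.mem_range_self 1)
      have m2 : u 2 ∈ Submodule.span ℂ (Set.range u) :=
        Submodule.subset_span (Set.mem_range_self 2)
      exact Submodule.add_mem _ (Submodule.add_mem _ (Submodule.smul_mem _ _ m0)
        (Submodule.smul_mem _ _ m1)) (Submodule.smul_mem _ _ m2)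
    · rw [Submodule.span_le]
      rintro y ⟨t, rfl⟩
      exact hmem t
  · rw [Fintype.linearIndependent_iff]
    intro g hg
    have key : ∀ k : Fin 6, g 0 * u 0 k + g 1 * u 1 k + g 2 * u 2 k = 0 := by
      intro k
      have := congrFun hg k
      simpa [Fin.sum_univ_three] using this
    have e0 := key i0
    have e1 := key i1
    have e2 := key i2
    rw [(hval i0).1, (hval i0).2.1, (hval i0).2.2] at e0
    rw [(hval i1).1, (hval i1).2.1, (hval i1).2.2] at e1
    rw [(hval i2).1, (hval i2).2.1, (hval i2).2.2] at e2
    simp only [if_pos rfl, if_neg d1, if_neg h01, if_neg d3, if_neg h02, if_neg d5,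
      if_neg (Ne.symm h01), if_neg (Ne.symm d6), if_neg d10, if_neg h12, if_neg d12,
      if_neg (Ne.symm h02), if_neg (Ne.symm d8), if_neg (Ne.symm h12), if_neg (Ne.symm d13),
      if_neg d15, if_true] at e0 e1 e2
    have e0' : g 0 = 0 := by linear_combination e0
    have e1' : g 1 = 0 := by linear_combination e1
    have e2' : g 2 = 0 := by linear_combination e2
    intro t
    fin_cases t
    · simpa using e0'
    · simpa using e1'
    · simpa using e2'

lemma pairSub_finrank (σ : Equiv.Perm (Fin 6)) (hinv : ∀ i, σ (σ i) = i)
    {i0 i1 i2 : Fin 6} (h01 : i0 ≠ i1) (h02 : i0 ≠ i2) (h12 : i1 ≠ i2)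
    (hne0 : σ i0 ≠ i0) (hne1 : σ i1 ≠ i1) (hne2 : σ i2 ≠ i2)
    (hA : i1 ≠ σ i0) (hB : i2 ≠ σ i0) (hC : i2 ≠ σ i1) :
    Module.finrank ℂ (pairSub σ) = 3 := by
  obtain ⟨hspan, hli⟩ := pairSub_eq_span σ hinv h01 h02 h12 hne0 hne1 hne2 hA hB hC _ rfl
  rw [hspan, finrank_span_eq_card hli]
  simp

-- vanishing of power sums on pairSub
lemma pair_sums (σ : Equiv.Perm (Fin 6)) (x : Fin 6 → ℂ)
    (hx : ∀ i, x i + x (σ i) = 0) :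
    (∑ i, x i) = 0 ∧ (∑ i, (x i)^3) = 0 := by
  have hs : ∑ i, x (σ i) = ∑ i, x i := Fintype.sum_equiv σ _ _ (fun i => rfl)
  have hs3 : ∑ i, (x (σ i))^3 = ∑ i, (x i)^3 := Fintype.sum_equiv σ _ _ (fun i => rfl)
  constructor
  · have h2 : (2 : ℂ) * ∑ i, x i = 0 := by
      rw [two_mul]
      nth_rewrite 2 [← hs]
      rw [← Finset.sum_add_distrib]
      exact Finset.sum_eq_zero fun i _ => hx i
    have := mul_eq_zero.1 h2
    simpa using this
  · have h2 : (2 : ℂ) * ∑ i, (x i)^3 = 0 := by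
      rw [two_mul]
      nth_rewrite 2 [← hs3]
      rw [← Finset.sum_add_distrib]
      refine Finset.sum_eq_zero fun i _ => ?_
      have : x (σ i) = -x i := by linear_combination hx i
      rw [this]; ring
    have := mul_eq_zero.1 h2
    simpa using this

lemma polar (W : Submodule ℂ (Fin 6 → ℂ)) (h : ∀ x ∈ W, ∑ i, (x i)^3 = 0) :
    ∀ x ∈ W, ∀ y ∈ W, ∀ z ∈ W, ∑ i, x i * y i * z i = 0 := by
  intro x hx y hy z hz
  have h1 := h _ (W.add_mem (W.add_mem hx hy) hz)
  have h2 := h _ (W.add_mem hx hy)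
  have h3 := h _ (W.add_mem hx hz)
  have h4 := h _ (W.add_mem hy hz)
  have h5 := h x hx
  have h6 := h y hy
  have h7 := h z hz
  simp only [Fin.sum_univ_six, Pi.add_apply] at h1 h2 h3 h4 h5 h6 h7 ⊢
  linear_combination (h1 - h2 - h3 - h4 + h5 + h6 + h7) / 6

lemma rows_span (bv : Fin 3 → Fin 6 → ℂ) (hli : LinearIndependent ℂ bv) :
    Submodule.span ℂ (Set.range (fun i : Fin 6 => fun t : Fin 3 => bv t i)) = ⊤ := by
  set Mat : Matrix (Fin 6) (Fin 3) ℂ := fun i t => bv t i with hMat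
  have hrank : Mat.rank = 3 := by
    rw [← Matrix.rank_transpose]
    have : LinearIndependent ℂ (Matᵀ) := hli
    exact this.rank_matrix.trans (by simp)
  have hspan := Mat.rank_eq_finrank_span_row
  rw [hrank] at hspan
  apply Submodule.eq_top_of_finrank_eq
  rw [show Module.finrank ℂ (Fin 3 → ℂ) = 3 by simp]
  exact hspan.symm

set_option maxHeartbeats 2000000 in
lemma forward (W : Submodule ℂ (Fin 6 → ℂ)) (hW3 : Module.finrank ℂ W = 3)
    (hsum0 : ∀ x ∈ W, (∑ i, x i) = 0)
    (hcube0 : ∀ x ∈ W, (∑ i, (x i)^3) = 0) :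
    ∃ σ : Equiv.Perm (Fin 6), (∀ i, σ (σ i) = i) ∧ (∀ i, σ i ≠ i) ∧ W = pairSub σ := by
  classical
  -- basis of W
  let B : Module.Basis (Fin 3) ℂ W := Module.finBasisOfFinrankEq ℂ W hW3
  set bv : Fin 3 → Fin 6 → ℂ := fun t => (B t : Fin 6 → ℂ) with hbv
  have hbW : ∀ t, bv t ∈ W := fun t => (B t).2
  have hbli : LinearIndependent ℂ bv := B.linearIndependent.map' W.subtype W.ker_subtype
  set v : Fin 6 → Fin 3 → ℂ := fun i t => bv t i with hv
  have hv_span : Submodule.span ℂ (Set.range v) = ⊤ := rows_span bv hbli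
  have htri := polar W hcube0
  have hcube : ∀ s t u, ∑ i, v i s * v i t * v i u = 0 :=
    fun s t u => htri _ (hbW s) _ (hbW t) _ (hbW u)
  have hsum1 : ∀ t, ∑ i, v i t = 0 := fun t => hsum0 _ (hbW t)
  -- extract a basis from the spanning rows
  obtain ⟨s, hs_sub, hs_span, hs_li⟩ := exists_linearIndependent ℂ (Set.range v)
  rw [hv_span] at hs_span
  have hs_fin : s.Finite := hs_li.setFinite
  haveI := hs_fin.fintype
  have hcard : s.toFinset.card = 3 := by
    have := finrank_span_set_eq_card hs_li
    rw [hs_span] at this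
    simp only [finrank_top] at this
    rw [← this]
    simp
  obtain ⟨w0, w1, w2, hw01, hw02, hw12, hseq⟩ := Finset.card_eq_three.1 hcard
  have hs_set : s = {w0, w1, w2} := by
    ext y
    rw [← Set.mem_toFinset, hseq]
    simp
  have hw0s : w0 ∈ s := by rw [hs_set]; simp
  have hw1s : w1 ∈ s := by rw [hs_set]; simp
  have hw2s : w2 ∈ s := by rw [hs_set]; simp
  obtain ⟨p, hvp⟩ := hs_sub hw0s
  obtain ⟨q, hvq⟩ := hs_sub hw1s
  obtain ⟨r, hvr⟩ := hs_sub hw2s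
  have hpq : p ≠ q := by rintro rfl; exact hw01 (hvp ▸ hvq ▸ rfl)
  have hpr : p ≠ r := by rintro rfl; exact hw02 (hvp ▸ hvr ▸ rfl)
  have hqr : q ≠ r := by rintro rfl; exact hw12 (hvq ▸ hvr ▸ rfl)
  -- the basis ![w0, w1, w2]
  set G : Fin 3 → Fin 3 → ℂ := ![w0, w1, w2] with hG
  have hGli : LinearIndependent ℂ G := by
    have hf0 : G 0 ∈ s := by rw [hs_set]; simp [hG]
    have hf1 : G 1 ∈ s := by rw [hs_set]; simp [hG]
    have hf2 : G 2 ∈ s := by rw [hs_set]; simp [hG]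
    let f : Fin 3 → s := ![⟨G 0, hf0⟩, ⟨G 1, hf1⟩, ⟨G 2, hf2⟩]
    have hfinj : Function.Injective f := by
      intro j j' hjj'
      fin_cases j <;> fin_cases j' <;> simp_all [f, hG] <;>
        first
          | rfl
          | (exfalso; first
              | exact hw01 (by assumption)
              | exact hw02 (by assumption)
              | exact hw12 (by assumption)
              | exact hw01 (by symm; assumption)
              | exact hw02 (by symm; assumption)
              | exact hw12 (by symm; assumption))
    have hcomp := hs_li.comp f hfinj
    have hvf : (Subtype.val ∘ f) = G := by
      funext j; fin_cases j <;> rfl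
    rwa [hvf] at hcomp
  have hGspan : ⊤ ≤ Submodule.span ℂ (Set.range G) := by
    have hrange : Set.range G = s := by
      rw [hs_set]
      ext y
      constructor
      · rintro ⟨j, rfl⟩; fin_cases j <;> simp [hG]
      · rintro (rfl | rfl | rfl)
        exacts [⟨0, rfl⟩, ⟨1, rfl⟩, ⟨2, rfl⟩]
    rw [hrange, hs_span]
  let B3 : Module.Basis (Fin 3) ℂ (Fin 3 → ℂ) := Module.Basis.mk hGli hGspan
  let T : (Fin 3 → ℂ) ≃ₗ[ℂ] (Fin 3 → ℂ) := B3.equivFun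
  set w : Fin 6 → Fin 3 → ℂ := fun i => T (v i) with hwdef
  -- values of w on p, q, r
  have hwG : ∀ j : Fin 3, T (G j) = fun t => if j = t then 1 else 0 := by
    intro j
    funext t
    have h1 : B3 j = G j := Module.Basis.mk_apply hGli hGspan j
    have := B3.equivFun_self j t
    rw [h1] at this
    exact this
  have hwp : w p = fun t => if (0 : Fin 3) = t then 1 else 0 := by
    rw [hwdef]; show T (v p) = _; rw [hvp]
    have : w0 = G 0 := rfl
    rw [this, hwG 0]
  have hwq : w q = fun t => if (1 : Fin 3) = t then 1 else 0 := by
    rw [hwdef]; show T (v q) = _; rw [hvq]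
    have : w1 = G 1 := rfl
    rw [this, hwG 1]
  have hwr : w r = fun t => if (2 : Fin 3) = t then 1 else 0 := by
    rw [hwdef]; show T (v r) = _; rw [hvr]
    have : w2 = G 2 := rfl
    rw [this, hwG 2]
  -- matrix of T
  set A : Matrix (Fin 3) (Fin 3) ℂ := LinearMap.toMatrix' (T : (Fin 3 → ℂ) →ₗ[ℂ] (Fin 3 → ℂ))
    with hA
  have hw_comp : ∀ i t, w i t = ∑ a, A t a * v i a := by
    intro i t
    have : T (v i) = A.mulVec (v i) := by
      rw [hA, ← Matrix.toLin'_apply, Matrix.toLin'_toMatrix']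
      rfl
    rw [hwdef]
    show (T (v i)) t = _
    rw [this]
    simp [Matrix.mulVec, dotProduct]
  -- transformed conditions
  have hsum1' : ∀ t, ∑ i, w i t = 0 := by
    intro t
    calc ∑ i, w i t = ∑ i, ∑ a, A t a * v i a := by
          exact Finset.sum_congr rfl fun i _ => hw_comp i t
      _ = ∑ a, A t a * ∑ i, v i a := by
          rw [Finset.sum_comm]
          exact Finset.sum_congr rfl fun a _ => by rw [Finset.mul_sum]
      _ = 0 := by
          refine Finset.sum_eq_zero fun a _ => ?_
          rw [hsum1 a, mul_zero]
  have hcubeE : ∀ a b c : Fin 3,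
      v 0 a * v 0 b * v 0 c + v 1 a * v 1 b * v 1 c + v 2 a * v 2 b * v 2 c +
      v 3 a * v 3 b * v 3 c + v 4 a * v 4 b * v 4 c + v 5 a * v 5 b * v 5 c = 0 := by
    intro a b c
    have := hcube a b c
    rwa [Fin.sum_univ_six] at this
  have hcube' : ∀ t1 t2 t3, ∑ i, w i t1 * w i t2 * w i t3 = 0 := by
    intro t1 t2 t3
    have hrw : ∀ i, w i t1 * w i t2 * w i t3 =
        (∑ a, A t1 a * v i a) * (∑ a, A t2 a * v i a) * (∑ a, A t3 a * v i a) := by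
      intro i; rw [hw_comp i t1, hw_comp i t2, hw_comp i t3]
    rw [Finset.sum_congr rfl fun i _ => hrw i]
    simp only [Fin.sum_univ_three, Fin.sum_univ_six]
    linear_combination A t1 0 * A t2 0 * A t3 0 * hcubeE 0 0 0 +
      A t1 0 * A t2 0 * A t3 1 * hcubeE 0 0 1 +
      A t1 0 * A t2 0 * A t3 2 * hcubeE 0 0 2 +
      A t1 0 * A t2 1 * A t3 0 * hcubeE 0 1 0 +
      A t1 0 * A t2 1 * A t3 1 * hcubeE 0 1 1 +
      A t1 0 * A t2 1 * A t3 2 * hcubeE 0 1 2 +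
      A t1 0 * A t2 2 * A t3 0 * hcubeE 0 2 0 +
      A t1 0 * A t2 2 * A t3 1 * hcubeE 0 2 1 +
      A t1 0 * A t2 2 * A t3 2 * hcubeE 0 2 2 +
      A t1 1 * A t2 0 * A t3 0 * hcubeE 1 0 0 +
      A t1 1 * A t2 0 * A t3 1 * hcubeE 1 0 1 +
      A t1 1 * A t2 0 * A t3 2 * hcubeE 1 0 2 +
      A t1 1 * A t2 1 * A t3 0 * hcubeE 1 1 0 +
      A t1 1 * A t2 1 * A t3 1 * hcubeE 1 1 1 +
      A t1 1 * A t2 1 * A t3 2 * hcubeE 1 1 2 +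
      A t1 1 * A t2 2 * A t3 0 * hcubeE 1 2 0 +
      A t1 1 * A t2 2 * A t3 1 * hcubeE 1 2 1 +
      A t1 1 * A t2 2 * A t3 2 * hcubeE 1 2 2 +
      A t1 2 * A t2 0 * A t3 0 * hcubeE 2 0 0 +
      A t1 2 * A t2 0 * A t3 1 * hcubeE 2 0 1 +
      A t1 2 * A t2 0 * A t3 2 * hcubeE 2 0 2 +
      A t1 2 * A t2 1 * A t3 0 * hcubeE 2 1 0 +
      A t1 2 * A t2 1 * A t3 1 * hcubeE 2 1 1 +
      A t1 2 * A t2 1 * A t3 2 * hcubeE 2 1 2 +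
      A t1 2 * A t2 2 * A t3 0 * hcubeE 2 2 0 +
      A t1 2 * A t2 2 * A t3 1 * hcubeE 2 2 1 +
      A t1 2 * A t2 2 * A t3 2 * hcubeE 2 2 2
  -- complement indices l, m, n
  have hpqr_card : ({p, q, r} : Finset (Fin 6)).card = 3 := by
    rw [Finset.card_insert_of_notMem (by simp [hpq, hpr]),
      Finset.card_insert_of_notMem (by simp [hqr]), Finset.card_singleton]
  have hcompl_card : (({p, q, r} : Finset (Fin 6))ᶜ).card = 3 := by
    rw [Finset.card_compl, hpqr_card]
    rfl
  obtain ⟨l, m, n, hlm, hln, hmn, hcompl⟩ := Finset.card_eq_three.1 hcompl_card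
  have hlmem : l ∉ ({p, q, r} : Finset (Fin 6)) := by
    rw [← Finset.mem_compl, hcompl]; simp
  have hmmem : m ∉ ({p, q, r} : Finset (Fin 6)) := by
    rw [← Finset.mem_compl, hcompl]; simp
  have hnmem : n ∉ ({p, q, r} : Finset (Fin 6)) := by
    rw [← Finset.mem_compl, hcompl]; simp
  have hl : l ≠ p ∧ l ≠ q ∧ l ≠ r := by
    simp only [Finset.mem_insert, Finset.mem_singleton, not_or] at hlmem; exact hlmem
  have hm : m ≠ p ∧ m ≠ q ∧ m ≠ r := by
    simp only [Finset.mem_insert, Finset.mem_singleton, not_or] at hmmem; exact hmmem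
  have hn : n ≠ p ∧ n ≠ q ∧ n ≠ r := by
    simp only [Finset.mem_insert, Finset.mem_singleton, not_or] at hnmem; exact hnmem
  have huniv : ({p, q, r, l, m, n} : Finset (Fin 6)) = Finset.univ := by
    apply Finset.eq_univ_of_card
    rw [Finset.card_insert_of_notMem
        (by simp [hpq, hpr, Ne.symm hl.1, Ne.symm hm.1, Ne.symm hn.1]),
      Finset.card_insert_of_notMem (by simp [hqr, Ne.symm hl.2.1, Ne.symm hm.2.1, Ne.symm hn.2.1]),
      Finset.card_insert_of_notMem (by simp [Ne.symm hl.2.2, Ne.symm hm.2.2, Ne.symm hn.2.2]),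
      Finset.card_insert_of_notMem (by simp [hlm, hln]),
      Finset.card_insert_of_notMem (by simp [hmn]), Finset.card_singleton]
    rfl
  have hsum6 : ∀ F : Fin 6 → ℂ, (∑ i, F i) = F p + F q + F r + F l + F m + F n := by
    intro F
    rw [← huniv,
      Finset.sum_insert (by simp [hpq, hpr, Ne.symm hl.1, Ne.symm hm.1, Ne.symm hn.1]),
      Finset.sum_insert (by simp [hqr, Ne.symm hl.2.1, Ne.symm hm.2.1, Ne.symm hn.2.1]),
      Finset.sum_insert (by simp [Ne.symm hl.2.2, Ne.symm hm.2.2, Ne.symm hn.2.2]),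
      Finset.sum_insert (by simp [hlm, hln]),
      Finset.sum_insert (by simp [hmn]), Finset.sum_singleton]
    ring
  -- the E and L equations
  have hif : ∀ t1 t2 t3 : Fin 3, w p t1 * w p t2 * w p t3 + w q t1 * w q t2 * w q t3 +
      w r t1 * w r t2 * w r t3 = if t1 = t2 ∧ t2 = t3 then 1 else 0 := by
    intro t1 t2 t3
    rw [hwp, hwq, hwr]
    fin_cases t1 <;> fin_cases t2 <;> fin_cases t3 <;> norm_num [Fin.ext_iff]
  have hifL : ∀ t : Fin 3, w p t + w q t + w r t = 1 := by
    intro t; rw [hwp, hwq, hwr]; fin_cases t <;> norm_num [Fin.ext_iff]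
  have hE : ∀ t1 t2 t3 : Fin 3, w l t1 * w l t2 * w l t3 + w m t1 * w m t2 * w m t3 +
      w n t1 * w n t2 * w n t3 + (if t1 = t2 ∧ t2 = t3 then 1 else 0) = 0 := by
    intro t1 t2 t3
    have h6 := hcube' t1 t2 t3
    rw [hsum6 (fun i => w i t1 * w i t2 * w i t3)] at h6
    linear_combination h6 - hif t1 t2 t3
  have hL : ∀ t : Fin 3, w l t + w m t + w n t + 1 = 0 := by
    intro t
    have h6 := hsum1' t
    rw [hsum6 (fun i => w i t)] at h6
    linear_combination h6 - hifL t
  obtain ⟨k0, k1, k2, hk01, hk02, hk12, hwl, hwm, hwn⟩ := core (w l) (w m) (w n) hE hL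
  -- the permutation
  set g : Fin 3 → Fin 6 := ![p, q, r] with hg
  have hgval : ∀ j : Fin 3, w (g j) = fun t => if j = t then 1 else 0 := by
    intro j; fin_cases j
    · simpa [hg] using hwp
    · simpa [hg] using hwq
    · simpa [hg] using hwr
  have hglmem : ∀ j : Fin 3, g j = p ∨ g j = q ∨ g j = r := by
    intro j; fin_cases j <;> simp [hg]
  have hlg : ∀ j, l ≠ g j := by
    intro j; rcases hglmem j with h | h | h <;> rw [h]
    exacts [hl.1, hl.2.1, hl.2.2]
  have hmg : ∀ j, m ≠ g j := by
    intro j; rcases hglmem j with h | h | h <;> rw [h]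
    exacts [hm.1, hm.2.1, hm.2.2]
  have hng : ∀ j, n ≠ g j := by
    intro j; rcases hglmem j with h | h | h <;> rw [h]
    exacts [hn.1, hn.2.1, hn.2.2]
  have hginj : ∀ j j' : Fin 3, j ≠ j' → g j ≠ g j' := by
    intro j j' hne
    fin_cases j <;> fin_cases j' <;>
      first
        | exact absurd rfl hne
        | (simp only [hg, Matrix.cons_val_zero, Matrix.cons_val_one, Matrix.head_cons,
            Matrix.cons_val_two, Matrix.tail_cons]
           first
             | exact hpq
             | exact hpr
             | exact hqr
             | exact Ne.symm hpq
             | exact Ne.symm hpr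
             | exact Ne.symm hqr)
  set σ : Equiv.Perm (Fin 6) :=
    Equiv.swap l (g k0) * Equiv.swap m (g k1) * Equiv.swap n (g k2) with hσdef
  have happ : ∀ x, σ x = Equiv.swap l (g k0) (Equiv.swap m (g k1) (Equiv.swap n (g k2) x)) :=
    fun x => rfl
  have hσl : σ l = g k0 := by
    rw [happ, Equiv.swap_apply_of_ne_of_ne hln (hlg k2),
      Equiv.swap_apply_of_ne_of_ne hlm (hlg k1), Equiv.swap_apply_left]
  have hσm : σ m = g k1 := by
    rw [happ, Equiv.swap_apply_of_ne_of_ne hmn (hmg k2), Equiv.swap_apply_left,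
      Equiv.swap_apply_of_ne_of_ne (Ne.symm (hlg k1)) (hginj k1 k0 (Ne.symm hk01))]
  have hσn : σ n = g k2 := by
    rw [happ, Equiv.swap_apply_left,
      Equiv.swap_apply_of_ne_of_ne (Ne.symm (hmg k2)) (hginj k2 k1 (Ne.symm hk12)),
      Equiv.swap_apply_of_ne_of_ne (Ne.symm (hlg k2)) (hginj k2 k0 (Ne.symm hk02))]
  have hσgk0 : σ (g k0) = l := by
    rw [happ, Equiv.swap_apply_of_ne_of_ne (Ne.symm (hng k0)) (hginj k0 k2 hk02),
      Equiv.swap_apply_of_ne_of_ne (Ne.symm (hmg k0)) (hginj k0 k1 hk01),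
      Equiv.swap_apply_right]
  have hσgk1 : σ (g k1) = m := by
    rw [happ, Equiv.swap_apply_of_ne_of_ne (Ne.symm (hng k1)) (hginj k1 k2 hk12),
      Equiv.swap_apply_right, Equiv.swap_apply_of_ne_of_ne (Ne.symm hlm) (hmg k0)]
  have hσgk2 : σ (g k2) = n := by
    rw [happ, Equiv.swap_apply_right,
      Equiv.swap_apply_of_ne_of_ne (Ne.symm hmn) (hng k1),
      Equiv.swap_apply_of_ne_of_ne (Ne.symm hln) (hng k0)]
  have cover3 : ∀ j : Fin 3, j = k0 ∨ j = k1 ∨ j = k2 := by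
    have : ∀ a b c j : Fin 3, a ≠ b → a ≠ c → b ≠ c → j = a ∨ j = b ∨ j = c := by decide
    exact fun j => this k0 k1 k2 j hk01 hk02 hk12
  have hcover : ∀ i : Fin 6, i = g 0 ∨ i = g 1 ∨ i = g 2 ∨ i = l ∨ i = m ∨ i = n := by
    intro i
    have : i ∈ ({p, q, r, l, m, n} : Finset (Fin 6)) := huniv ▸ Finset.mem_univ i
    simp only [Finset.mem_insert, Finset.mem_singleton] at this
    have hg0 : g 0 = p := by simp [hg]
    have hg1 : g 1 = q := by simp [hg]
    have hg2 : g 2 = r := by simp [hg]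
    rw [hg0, hg1, hg2]
    tauto
  have hswap_if1 : ∀ (t kk : Fin 3), (if kk = t then (1:ℂ) else 0) = -(if t = kk then -1 else 0) := by
    intro t kk; by_cases h : t = kk
    · simp [h]
    · simp [h, Ne.symm h]
  have hswap_if2 : ∀ (t kk : Fin 3), (if t = kk then (-1:ℂ) else 0) = -(if kk = t then 1 else 0) := by
    intro t kk; by_cases h : t = kk
    · simp [h]
    · simp [h, Ne.symm h]
  have hw_pair : ∀ i t, w (σ i) t = -(w i t) := by
    have hgcase : ∀ j : Fin 3, ∀ t, w (σ (g j)) t = -(w (g j) t) := by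
      intro j t
      rcases cover3 j with h | h | h
      · rw [h, hσgk0, hwl t, congrFun (hgval k0) t]; exact hswap_if2 t k0
      · rw [h, hσgk1, hwm t, congrFun (hgval k1) t]; exact hswap_if2 t k1
      · rw [h, hσgk2, hwn t, congrFun (hgval k2) t]; exact hswap_if2 t k2
    intro i t
    rcases hcover i with rfl | rfl | rfl | rfl | rfl | rfl
    · exact hgcase 0 t
    · exact hgcase 1 t
    · exact hgcase 2 t
    · rw [hσl, congrFun (hgval k0) t, hwl t]; exact hswap_if1 t k0
    · rw [hσm, congrFun (hgval k1) t, hwm t]; exact hswap_if1 t k1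
    · rw [hσn, congrFun (hgval k2) t, hwn t]; exact hswap_if1 t k2
  have hv_pair : ∀ i, v (σ i) = -(v i) := by
    intro i
    have h1 : T (v (σ i)) = -(T (v i)) := by
      funext t
      have := hw_pair i t
      simpa [hwdef] using this
    have h2 := congrArg T.symm h1
    simpa [map_neg] using h2
  -- σ is a fixed-point-free involution
  have hinv : ∀ i, σ (σ i) = i := by
    have hginvcase : ∀ j : Fin 3, σ (σ (g j)) = g j := by
      intro j
      rcases cover3 j with h | h | h
      · rw [h, hσgk0, hσl]
      · rw [h, hσgk1, hσm]
      · rw [h, hσgk2, hσn]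
    intro i
    rcases hcover i with rfl | rfl | rfl | rfl | rfl | rfl
    · exact hginvcase 0
    · exact hginvcase 1
    · exact hginvcase 2
    · rw [hσl, hσgk0]
    · rw [hσm, hσgk1]
    · rw [hσn, hσgk2]
  have hfpf : ∀ i, σ i ≠ i := by
    have hgfpf : ∀ j : Fin 3, σ (g j) ≠ g j := by
      intro j
      rcases cover3 j with h | h | h
      · rw [h, hσgk0]; exact hlg k0
      · rw [h, hσgk1]; exact hmg k1
      · rw [h, hσgk2]; exact hng k2
    intro i
    rcases hcover i with rfl | rfl | rfl | rfl | rfl | rfl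
    · exact hgfpf 0
    · exact hgfpf 1
    · exact hgfpf 2
    · rw [hσl]; exact Ne.symm (hlg k0)
    · rw [hσm]; exact Ne.symm (hmg k1)
    · rw [hσn]; exact Ne.symm (hng k2)
  -- W = pairSub σ
  have hbv_pair : ∀ t, bv t ∈ pairSub σ := by
    intro t
    rw [mem_pairSub]
    intro i
    have h1 : v (σ i) t = -(v i t) := congrFun (hv_pair i) t
    have h2 : bv t (σ i) = v (σ i) t := rfl
    have h3 : bv t i = v i t := rfl
    rw [h2, h3, h1]
    ring
  have hWspan : Submodule.span ℂ (Set.range bv) = W := by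
    apply Submodule.eq_of_le_of_finrank_le
    · rw [Submodule.span_le]
      rintro y ⟨t, rfl⟩
      exact hbW t
    · rw [hW3, finrank_span_eq_card hbli]
      simp
  have hWle : W ≤ pairSub σ := by
    rw [← hWspan, Submodule.span_le]
    rintro y ⟨t, rfl⟩
    exact hbv_pair t
  have hσlne : σ l ≠ l := by rw [hσl]; exact Ne.symm (hlg k0)
  have hσmne : σ m ≠ m := by rw [hσm]; exact Ne.symm (hmg k1)
  have hσnne : σ n ≠ n := by rw [hσn]; exact Ne.symm (hng k2)
  have hrank_pair : Module.finrank ℂ (pairSub σ) = 3 :=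
    pairSub_finrank σ hinv hlm hln hmn hσlne hσmne hσnne
      (by rw [hσl]; exact hmg k0) (by rw [hσl]; exact hng k0) (by rw [hσm]; exact hng k1)
  have hfinal : W = pairSub σ :=
    Submodule.eq_of_le_of_finrank_le hWle (by rw [hrank_pair, hW3])
  exact ⟨σ, hinv, hfpf, hfinal⟩

lemma pairSub_finrank_abs (σ : Equiv.Perm (Fin 6)) (hinv : ∀ i, σ (σ i) = i)
    (hfpf : ∀ i, σ i ≠ i) : Module.finrank ℂ (pairSub σ) = 3 := by
  have hc1 : ((({(0 : Fin 6), σ 0} : Finset (Fin 6)))ᶜ).Nonempty := by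
    rw [← Finset.card_pos, Finset.card_compl]
    have h1 := Finset.card_insert_le (0 : Fin 6) ({σ 0} : Finset (Fin 6))
    have h2 : ({σ 0} : Finset (Fin 6)).card = 1 := Finset.card_singleton _
    have h3 : Fintype.card (Fin 6) = 6 := by simp
    omega
  obtain ⟨i1, hi1⟩ := hc1
  have hi1' : i1 ≠ 0 ∧ i1 ≠ σ 0 := by
    rw [Finset.mem_compl, Finset.mem_insert, Finset.mem_singleton, not_or] at hi1
    exact hi1
  have hc2 : ((({(0 : Fin 6), σ 0, i1, σ i1} : Finset (Fin 6)))ᶜ).Nonempty := by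
    rw [← Finset.card_pos, Finset.card_compl]
    have h1 := Finset.card_insert_le (0 : Fin 6) ({σ 0, i1, σ i1} : Finset (Fin 6))
    have h2 := Finset.card_insert_le (σ 0) ({i1, σ i1} : Finset (Fin 6))
    have h3 := Finset.card_insert_le i1 ({σ i1} : Finset (Fin 6))
    have h4 : ({σ i1} : Finset (Fin 6)).card = 1 := Finset.card_singleton _
    have h5 : Fintype.card (Fin 6) = 6 := by simp
    omega
  obtain ⟨i2, hi2⟩ := hc2
  have hi2' : i2 ≠ 0 ∧ i2 ≠ σ 0 ∧ i2 ≠ i1 ∧ i2 ≠ σ i1 := by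
    rw [Finset.mem_compl, Finset.mem_insert, Finset.mem_insert, Finset.mem_insert,
      Finset.mem_singleton, not_or, not_or, not_or] at hi2
    exact ⟨hi2.1, hi2.2.1, hi2.2.2.1, hi2.2.2.2⟩
  exact pairSub_finrank σ hinv (Ne.symm hi1'.1) (Ne.symm hi2'.1) (Ne.symm hi2'.2.2.1)
    (hfpf 0) (hfpf i1) (hfpf i2) hi1'.2 hi2'.2.1 hi2'.2.2.2

lemma pairSub_injOn : Set.InjOn (fun σ : Equiv.Perm (Fin 6) => pairSub σ)
    {σ | (∀ i, σ (σ i) = i) ∧ (∀ i, σ i ≠ i)} := by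
  intro σ1 h1 σ2 h2 heq
  have heq' : pairSub σ1 = pairSub σ2 := heq
  apply Equiv.ext
  intro i
  by_contra hne
  have hσσ : σ2 i ≠ σ1 i := fun h => hne h.symm
  have hx2 : (Pi.single i 1 - Pi.single (σ1 i) (1 : ℂ)) ∈ pairSub σ2 := by
    rw [← heq']
    exact single_pair_mem h1.1 i (h1.2 i)
  have key := hx2 i
  have hii : i ≠ σ1 i := Ne.symm (h1.2 i)
  have h2i : σ2 i ≠ i := h2.2 i
  simp only [Pi.sub_apply, Pi.single_eq_same, Pi.single_eq_of_ne hii,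
    Pi.single_eq_of_ne h2i, Pi.single_eq_of_ne hσσ] at key
  norm_num at key

theorem segre_cubic_fifteen_planes :
    (∀ W : Submodule ℂ (Fin 6 → ℂ), Module.finrank ℂ W = 3 →
      ((∀ x ∈ W, eval x (e 1) = 0 ∧ eval x (e 3) = 0) ↔
        ∃ σ : Equiv.Perm (Fin 6), (∀ i, σ (σ i) = i) ∧ (∀ i, σ i ≠ i) ∧
          (W : Set (Fin 6 → ℂ)) = {x | ∀ i, x i + x (σ i) = 0})) ∧
    Set.ncard {W : Submodule ℂ (Fin 6 → ℂ) |
      Module.finrank ℂ W = 3 ∧ ∀ x ∈ W, eval x (e 1) = 0 ∧ eval x (e 3) = 0} = 15 := by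
  classical
  have part1 : ∀ W : Submodule ℂ (Fin 6 → ℂ), Module.finrank ℂ W = 3 →
      ((∀ x ∈ W, eval x (e 1) = 0 ∧ eval x (e 3) = 0) ↔
        ∃ σ : Equiv.Perm (Fin 6), (∀ i, σ (σ i) = i) ∧ (∀ i, σ i ≠ i) ∧
          (W : Set (Fin 6 → ℂ)) = {x | ∀ i, x i + x (σ i) = 0}) := by
    intro W hW3
    constructor
    · intro hvan
      have hsum0 : ∀ x ∈ W, (∑ i, x i) = 0 := by
        intro x hx
        have := (hvan x hx).1
        rwa [eval_e1] at this
      have hcube0 : ∀ x ∈ W, (∑ i, (x i)^3) = 0 := by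
        intro x hx
        exact (eval_e3 x (hvan x hx).1).1 (hvan x hx).2
      obtain ⟨σ, hinv, hfpf, hW⟩ := forward W hW3 hsum0 hcube0
      exact ⟨σ, hinv, hfpf, by rw [hW]; rfl⟩
    · rintro ⟨σ, hinv, hfpf, hset⟩ x hx
      have hxp : ∀ i, x i + x (σ i) = 0 := by
        have hxmem : x ∈ {y : Fin 6 → ℂ | ∀ i, y i + y (σ i) = 0} := hset ▸ hx
        exact hxmem
      obtain ⟨h1, h3⟩ := pair_sums σ x hxp
      have he1 : eval x (e 1) = 0 := by rw [eval_e1]; exact h1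
      exact ⟨he1, (eval_e3 x he1).2 h3⟩
  refine ⟨part1, ?_⟩
  have hset_eq : {W : Submodule ℂ (Fin 6 → ℂ) |
      Module.finrank ℂ W = 3 ∧ ∀ x ∈ W, eval x (e 1) = 0 ∧ eval x (e 3) = 0}
      = (fun σ : Equiv.Perm (Fin 6) => pairSub σ) ''
        {σ | (∀ i, σ (σ i) = i) ∧ (∀ i, σ i ≠ i)} := by
    ext W
    constructor
    · rintro ⟨h3, hvan⟩
      obtain ⟨σ, hinv, hfpf, hsetW⟩ := (part1 W h3).1 hvan
      refine ⟨σ, ⟨hinv, hfpf⟩, ?_⟩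
      apply SetLike.ext'
      rw [hsetW]
      rfl
    · rintro ⟨σ, ⟨hinv, hfpf⟩, rfl⟩
      refine ⟨pairSub_finrank_abs σ hinv hfpf, ?_⟩
      intro x hx
      have hxp : ∀ i, x i + x (σ i) = 0 := hx
      obtain ⟨h1, h3⟩ := pair_sums σ x hxp
      have he1 : eval x (e 1) = 0 := by rw [eval_e1]; exact h1
      exact ⟨he1, (eval_e3 x he1).2 h3⟩
  rw [hset_eq, Set.ncard_image_of_injOn pairSub_injOn]
  rw [Set.ncard_eq_toFinset_card']
  rw [Set.toFinset_setOf]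
  decide
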